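/- arXiv:2104.04747 — 3 statements merged into one kernel-verified Lean document; each statement's English description precedes it below -/
import Mathlib

section
/- Let U be a real Hilbert space, A : U → U a bounded self-adjoint positive operator, and b ∈ U. Suppose there exists u* ∈ U with A u* + b = 0. Write u* = u + v with u ∈ ker A and v ∈ closure(range A). Then as ε → 0+, the elements u*_ε := -(A + εI)^{-1} b converge strongly to v, and A v + b = 0. -/
open scoped RealInnerProductSpace

theorem stmt_3 {U : Type*} [NormedAddCommGroup U] [InnerProductSpace ℝ U] [CompleteSpace U]
    (A : U →L[ℝ] U) (hA : IsSelfAdjoint A) (hpos : ∀ u : U, 0 ≤ ⟪A u, u⟫)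
    (b ustar u v : U)
    (hsol : A ustar + b = 0) (hu : A u = 0) (hv : v ∈ closure (Set.range A))
    (hdecomp : ustar = u + v)
    (T : ℝ → U →L[ℝ] U)
    (hT : ∀ ε > (0 : ℝ),
      (A + ε • ContinuousLinearMap.id ℝ U).comp (T ε) = ContinuousLinearMap.id ℝ U ∧
      (T ε).comp (A + ε • ContinuousLinearMap.id ℝ U) = ContinuousLinearMap.id ℝ U) :
    Filter.Tendsto (fun ε : ℝ => -(T ε b)) (nhdsWithin 0 (Set.Ioi 0)) (nhds v) ∧
      A v + b = 0 := by
  -- A v + b = 0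
  have hAv : A v + b = 0 := by
    have : A ustar = A v := by rw [hdecomp, map_add, hu, zero_add]
    rw [← this]; exact hsol
  -- pointwise identities
  have hleft : ∀ ε > (0:ℝ), ∀ x : U, A (T ε x) + ε • T ε x = x := by
    intro ε hε x
    have := congrArg (fun (S : U →L[ℝ] U) => S x) (hT ε hε).1
    simpa using this
  have hright : ∀ ε > (0:ℝ), ∀ x : U, T ε (A x) + ε • T ε x = x := by
    intro ε hε x
    have := congrArg (fun (S : U →L[ℝ] U) => S x) (hT ε hε).2
    simpa [map_add, map_smul] using this
  -- norm bound: ε * ‖T ε x‖ ≤ ‖x‖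
  have hbound : ∀ ε > (0:ℝ), ∀ x : U, ε * ‖T ε x‖ ≤ ‖x‖ := by
    intro ε hε x
    set y := T ε x with hy
    have h1 : A y + ε • y = x := hleft ε hε x
    have h2 : ε * (‖y‖ * ‖y‖) ≤ ⟪x, y⟫ := by
      have : ⟪A y + ε • y, y⟫ = ⟪x, y⟫ := by rw [h1]
      rw [inner_add_left, real_inner_smul_left, real_inner_self_eq_norm_mul_norm] at this
      nlinarith [hpos y]
    have h3 : ⟪x, y⟫ ≤ ‖x‖ * ‖y‖ := real_inner_le_norm x y
    rcases eq_or_lt_of_le (norm_nonneg y) with h | h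
    · rw [← h]; simpa using norm_nonneg x
    · have := le_trans h2 h3
      nlinarith
  -- the key convergence: ε • T ε v → 0
  have hkey : Filter.Tendsto (fun ε : ℝ => ε • T ε v) (nhdsWithin 0 (Set.Ioi 0)) (nhds 0) := by
    rw [Metric.tendsto_nhdsWithin_nhds]
    intro δ hδ
    obtain ⟨w, hw, hwd⟩ := Metric.mem_closure_iff.mp hv (δ / 3) (by linarith)
    obtain ⟨z, rfl⟩ := hw
    refine ⟨δ / (3 * (‖z‖ + 1)), by positivity, ?_⟩
    intro ε hε hεd
    have hε : 0 < ε := hε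
    rw [Real.dist_eq, sub_zero, abs_of_pos hε] at hεd
    rw [dist_zero_right]
    have hTAz : T ε (A z) = z - ε • T ε z := by
      have := hright ε hε z; linear_combination (norm := module) this
    calc ‖ε • T ε v‖ = ‖ε • T ε (v - A z) + ε • T ε (A z)‖ := by
            rw [← smul_add, ← map_add, sub_add_cancel]
      _ ≤ ‖ε • T ε (v - A z)‖ + ‖ε • T ε (A z)‖ := norm_add_le _ _
      _ ≤ ‖v - A z‖ + (ε * ‖z‖ + ε * (ε * ‖T ε z‖)) := by
            gcongr
            · rw [norm_smul, Real.norm_of_nonneg hε.le]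
              exact hbound ε hε _
            · rw [hTAz, norm_smul, Real.norm_of_nonneg hε.le]
              calc ε * ‖z - ε • T ε z‖ ≤ ε * (‖z‖ + ‖ε • T ε z‖) := by
                    gcongr; exact norm_sub_le _ _
                _ = ε * ‖z‖ + ε * (ε * ‖T ε z‖) := by
                    rw [norm_smul, Real.norm_of_nonneg hε.le]; ring
      _ ≤ ‖v - A z‖ + (ε * ‖z‖ + ε * ‖z‖) := by
            gcongr
            exact hbound ε hε z
      _ < δ := by
            have h1 : ‖v - A z‖ < δ / 3 := by rw [← dist_eq_norm]; exact hwd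
            have h2 : ε * ‖z‖ ≤ ε * (‖z‖ + 1) := by nlinarith [norm_nonneg z]
            have h3 : ε * (‖z‖ + 1) < δ / 3 := by
              have hz : (0:ℝ) < ‖z‖ + 1 := by positivity
              calc ε * (‖z‖ + 1) < δ / (3 * (‖z‖ + 1)) * (‖z‖ + 1) := by gcongr
                _ = δ / 3 := by field_simp
            linarith
  constructor
  · have heq : ∀ ε ∈ Set.Ioi (0:ℝ), -(T ε b) = v - ε • T ε v := by
      intro ε hε
      have hε : 0 < ε := hε
      have h1 : T ε (A v) + ε • T ε v = v := hright ε hε v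
      have hb : A v = -b := by linear_combination (norm := module) hAv
      rw [hb, map_neg] at h1
      linear_combination (norm := module) h1
    have : Filter.Tendsto (fun ε : ℝ => v - ε • T ε v) (nhdsWithin 0 (Set.Ioi 0)) (nhds v) := by
      have := Filter.Tendsto.sub (tendsto_const_nhds (x := v)) hkey
      simpa using this
    refine this.congr' ?_
    filter_upwards [self_mem_nhdsWithin] with ε hε
    exact (heq ε hε).symm
  · exact hAv
end

section
/- Let U be a real Hilbert space, A : U → U bounded self-adjoint positive, and b ∈ U. If the family {u*_ε := -(A+εI)^{-1} b}_{ε>0} is bounded in U, then there exists u* ∈ U with A u* + b = 0; in fact any weak limit point of u*_{ε_n} along a sequence ε_n → 0 satisfies this equation. -/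
open scoped RealInnerProductSpace

theorem stmt_4 {U : Type*} [NormedAddCommGroup U] [InnerProductSpace ℝ U] [CompleteSpace U]
    (A : U →L[ℝ] U) (hA : IsSelfAdjoint A) (hpos : ∀ u : U, 0 ≤ ⟪A u, u⟫)
    (b : U) (T : ℝ → U →L[ℝ] U)
    (hT : ∀ ε > (0 : ℝ),
      (A + ε • ContinuousLinearMap.id ℝ U).comp (T ε) = ContinuousLinearMap.id ℝ U ∧
      (T ε).comp (A + ε • ContinuousLinearMap.id ℝ U) = ContinuousLinearMap.id ℝ U)
    (M : ℝ) (hbdd : ∀ ε > (0 : ℝ), ‖-(T ε b)‖ ≤ M) :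
    (∃ ustar : U, A ustar + b = 0) ∧
    ∀ εn : ℕ → ℝ, (∀ k, 0 < εn k) → Filter.Tendsto εn Filter.atTop (nhds 0) →
      ∀ w : U,
        (∀ y : U, Filter.Tendsto (fun k => ⟪-(T (εn k) b), y⟫) Filter.atTop (nhds ⟪w, y⟫)) →
        A w + b = 0 := by
  have hsym : ∀ x y : U, ⟪A x, y⟫ = ⟪x, A y⟫ := fun x y =>
    (ContinuousLinearMap.isSelfAdjoint_iff_isSymmetric.mp hA) x y
  set u : ℝ → U := fun ε => -(T ε b) with hu
  -- key identity
  have hkey : ∀ ε > (0 : ℝ), A (u ε) + ε • u ε = -b := by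
    intro ε hε
    have h1 := (hT ε hε).1
    have h2 := congrArg (fun S : U →L[ℝ] U => S b) h1
    simp only [ContinuousLinearMap.comp_apply, ContinuousLinearMap.add_apply,
      ContinuousLinearMap.smul_apply, ContinuousLinearMap.id_apply] at h2
    show A (-(T ε b)) + ε • (-(T ε b)) = -b
    rw [map_neg, smul_neg, ← neg_add, h2]
  have hkey' : ∀ ε > (0 : ℝ), A (u ε) + b = -(ε • u ε) := by
    intro ε hε
    have := hkey ε hε
    have : A (u ε) + ε • u ε + b = 0 := by rw [this]; abel
    linear_combination (norm := abel) this
  -- monotonicity inequality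
  have hmono : ∀ ε δ : ℝ, 0 < ε → 0 < δ →
      (ε + δ) * ‖u ε - u δ‖ ^ 2 ≤ (δ - ε) * (‖u ε‖ ^ 2 - ‖u δ‖ ^ 2) := by
    intro ε δ hε hδ
    have h1 := hkey ε hε
    have h2 := hkey δ hδ
    have hAd : A (u ε - u δ) = δ • u δ - ε • u ε := by
      rw [map_sub]
      have : A (u ε) + ε • u ε = A (u δ) + δ • u δ := by rw [h1, h2]
      linear_combination (norm := abel) this
    have hp := hpos (u ε - u δ)
    rw [hAd] at hp
    have e1 : ⟪δ • u δ - ε • u ε, u ε - u δ⟫ =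
        δ * ⟪u ε, u δ⟫ - δ * ‖u δ‖ ^ 2 - ε * ‖u ε‖ ^ 2 + ε * ⟪u ε, u δ⟫ := by
      simp only [inner_sub_left, inner_sub_right, real_inner_smul_left]
      rw [real_inner_self_eq_norm_sq, real_inner_self_eq_norm_sq, real_inner_comm (u δ) (u ε)]
      ring
    rw [e1] at hp
    have hnorm : ‖u ε - u δ‖ ^ 2 = ‖u ε‖ ^ 2 - 2 * ⟪u ε, u δ⟫ + ‖u δ‖ ^ 2 :=
      norm_sub_sq_real (u ε) (u δ)
    rw [hnorm]
    nlinarith [hp]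
  -- norm square monotone in ε
  have hdecr : ∀ ε δ : ℝ, 0 < ε → ε ≤ δ → ‖u δ‖ ^ 2 ≤ ‖u ε‖ ^ 2 := by
    intro ε δ hε hεδ
    rcases eq_or_lt_of_le hεδ with h | h
    · rw [h]
    · have := hmono ε δ hε (hε.trans h)
      nlinarith [sq_nonneg ‖u ε - u δ‖, hε.trans h]
  -- the sequence
  set e : ℕ → ℝ := fun n => ((n : ℝ) + 1)⁻¹ with he
  have hepos : ∀ n : ℕ, 0 < e n := by
    intro n; positivity
  set s : ℕ → U := fun n => u (e n) with hs
  set G : ℕ → ℝ := fun n => ‖s n‖ ^ 2 with hG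
  have hanti : ∀ n m : ℕ, n ≤ m → e m ≤ e n := by
    intro n m h
    apply inv_anti₀ (by positivity)
    have : (n : ℝ) ≤ m := Nat.cast_le.mpr h
    linarith
  have hGmono : Monotone G := by
    intro n m h
    exact hdecr (e m) (e n) (hepos m) (hanti n m h)
  have hGbdd : BddAbove (Set.range G) := by
    refine ⟨M ^ 2, ?_⟩
    rintro x ⟨n, rfl⟩
    have hn : ‖s n‖ ≤ M := hbdd (e n) (hepos n)
    have : ‖s n‖ ^ 2 ≤ M ^ 2 := by nlinarith [norm_nonneg (s n)]
    exact this
  have hGconv : Filter.Tendsto G Filter.atTop (nhds (⨆ n, G n)) :=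
    tendsto_atTop_ciSup hGmono hGbdd
  have hGcauchy : CauchySeq G := hGconv.cauchySeq
  -- s is Cauchy
  have hdiff : ∀ N n : ℕ, N ≤ n → ‖s n - s N‖ ^ 2 ≤ G n - G N := by
    intro N n h
    have hεn := hepos n
    have hεN := hepos N
    have hle : e n ≤ e N := hanti N n h
    have hm := hmono (e n) (e N) hεn hεN
    have hGle : G N ≤ G n := hGmono h
    have hsum : 0 < e n + e N := by linarith
    have h2 : (e n + e N) * ‖s n - s N‖ ^ 2 ≤ (e n + e N) * (G n - G N) := by
      calc (e n + e N) * ‖s n - s N‖ ^ 2 ≤ (e N - e n) * (‖u (e n)‖ ^ 2 - ‖u (e N)‖ ^ 2) := hm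
        _ = (e N - e n) * (G n - G N) := by rfl
        _ ≤ (e n + e N) * (G n - G N) := by nlinarith
    exact le_of_mul_le_mul_left h2 hsum
  have hscauchy : CauchySeq s := by
    rw [Metric.cauchySeq_iff']
    intro r hr
    obtain ⟨N, hN⟩ := (Metric.cauchySeq_iff'.mp hGcauchy) (r ^ 2) (by positivity)
    refine ⟨N, fun n hn => ?_⟩
    have h1 := hdiff N n hn
    have h2 := hN n hn
    rw [Real.dist_eq] at h2
    have h3 : ‖s n - s N‖ ^ 2 < r ^ 2 := by
      have : G n - G N ≤ |G n - G N| := le_abs_self _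
      linarith
    have h4 : ‖s n - s N‖ < r := lt_of_pow_lt_pow_left₀ 2 hr.le h3
    rwa [dist_eq_norm]
  obtain ⟨ustar, hustar⟩ := cauchySeq_tendsto_of_complete hscauchy
  have hεtend : Filter.Tendsto e Filter.atTop (nhds 0) := by
    simpa using (tendsto_one_div_add_atTop_nhds_zero_nat :
      Filter.Tendsto (fun n : ℕ => 1 / ((n : ℝ) + 1)) Filter.atTop (nhds 0))
  -- general weak-limit argument; also used for part 1 via strong limit
  have main : ∀ εn : ℕ → ℝ, (∀ k, 0 < εn k) → Filter.Tendsto εn Filter.atTop (nhds 0) →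
      ∀ w : U,
        (∀ y : U, Filter.Tendsto (fun k => ⟪-(T (εn k) b), y⟫) Filter.atTop (nhds ⟪w, y⟫)) →
        A w + b = 0 := by
    intro εn hεn hεn0 w hw
    have key : ∀ y : U, ⟪A w + b, y⟫ = 0 := by
      intro y
      have h1 : Filter.Tendsto (fun k => ⟪A (u (εn k)) + b, y⟫) Filter.atTop
          (nhds ⟪A w + b, y⟫) := by
        have heq : (fun k => ⟪A (u (εn k)) + b, y⟫) =
            fun k => ⟪u (εn k), A y⟫ + ⟪b, y⟫ := by
          funext k
          rw [inner_add_left, hsym]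
        rw [heq]
        have := (hw (A y)).add_const ⟪b, y⟫
        have heq2 : ⟪A w + b, y⟫ = ⟪w, A y⟫ + ⟪b, y⟫ := by
          rw [inner_add_left, hsym]
        rw [heq2]
        exact this
      have h2 : Filter.Tendsto (fun k => ⟪A (u (εn k)) + b, y⟫) Filter.atTop (nhds 0) := by
        refine squeeze_zero_norm (a := fun k => εn k * (M * ‖y‖)) (fun k => ?_) ?_
        ·
          rw [hkey' (εn k) (hεn k)]
          have : ⟪-(εn k • u (εn k)), y⟫ = -(εn k * ⟪u (εn k), y⟫) := by
            rw [inner_neg_left, real_inner_smul_left]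
          rw [this]
          rw [Real.norm_eq_abs, abs_neg, abs_mul, abs_of_pos (hεn k)]
          apply mul_le_mul_of_nonneg_left _ (hεn k).le
          calc |⟪u (εn k), y⟫| ≤ ‖u (εn k)‖ * ‖y‖ := abs_real_inner_le_norm _ _
            _ ≤ M * ‖y‖ := by
                apply mul_le_mul_of_nonneg_right (hbdd (εn k) (hεn k)) (norm_nonneg y)
        · have := hεn0.mul_const (M * ‖y‖)
          simpa using this
      exact tendsto_nhds_unique h1 h2
    have := key (A w + b)
    exact inner_self_eq_zero.mp this
  constructor
  · refine ⟨ustar, ?_⟩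
    apply main e hepos hεtend ustar
    intro y
    have : Continuous fun x : U => ⟪x, y⟫ := Continuous.inner continuous_id continuous_const
    exact (this.tendsto ustar).comp hustar
  · exact main
end

section
/- Let P_{λ₀}, R₁₁ ∈ Sⁿ with R₁₁ + P_{λ₀} positive definite, and let L ∈ Sⁿ be positive semidefinite. Set K = R₁₁ + P_{λ₀}. Then 0 ⪯ (K + L)^{-1} ⪯ K^{-1} and for P = P_{λ₀} + L, the matrix M := P (R₁₁ + P)^{-2} P satisfies ⟨M x, x⟩ ≤ 4[1 + ‖K^{-1}‖²(‖K‖² + ‖P_{λ₀}‖²)]‖x‖² for all x ∈ ℝⁿ, where ‖·‖ denotes operator norm. -/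
open Matrix
open scoped RealInnerProductSpace

section Aux

variable {n : ℕ}

lemma aux_inner_psd {A : Matrix (Fin n) (Fin n) ℝ} (hA : A.PosSemidef)
    (x : EuclideanSpace ℝ (Fin n)) : 0 ≤ ⟪Matrix.toEuclideanCLM (𝕜 := ℝ) A x, x⟫ := by
  have h := hA.dotProduct_mulVec_nonneg ((WithLp.equiv 2 _) x)
  rw [EuclideanSpace.inner_eq_star_dotProduct]
  simpa [dotProduct_comm, Matrix.toLin'_apply] using h

lemma aux_adj {A : Matrix (Fin n) (Fin n) ℝ} (hA : A.IsHermitian)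
    (x y : EuclideanSpace ℝ (Fin n)) :
    ⟪Matrix.toEuclideanCLM (𝕜 := ℝ) A x, y⟫ = ⟪x, Matrix.toEuclideanCLM (𝕜 := ℝ) A y⟫ := by
  have h : ContinuousLinearMap.adjoint (Matrix.toEuclideanCLM (𝕜 := ℝ) A)
      = Matrix.toEuclideanCLM (𝕜 := ℝ) A := by
    rw [← ContinuousLinearMap.star_eq_adjoint, ← map_star]
    congr 1
  have h2 := ContinuousLinearMap.adjoint_inner_left (Matrix.toEuclideanCLM (𝕜 := ℝ) A) y x
  rw [h] at h2
  exact h2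

lemma aux_cs (S : EuclideanSpace ℝ (Fin n) →L[ℝ] EuclideanSpace ℝ (Fin n))
    (hpos : ∀ u, 0 ≤ ⟪S u, u⟫) (hadj : ∀ u v, ⟪S u, v⟫ = ⟪u, S v⟫)
    (u : EuclideanSpace ℝ (Fin n)) :
    ⟪S u, S u⟫ ^ 2 ≤ ⟪S u, u⟫ * ⟪S (S u), S u⟫ := by
  set d := ⟪S u, S u⟫ with hd
  set p := ⟪S u, u⟫ with hp
  set q := ⟪S (S u), S u⟫ with hq
  have key : ∀ t : ℝ, 0 ≤ p + 2 * t * d + t ^ 2 * q := by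
    intro t
    have h0 := hpos (u + t • S u)
    have he : ⟪S (u + t • S u), u + t • S u⟫ = p + 2 * t * d + t ^ 2 * q := by
      have e1 : ⟪S (S u), u⟫ = d := by rw [hadj (S u) u, real_inner_comm]
      simp only [map_add, _root_.map_smul, inner_add_left, inner_add_right,
        real_inner_smul_left, real_inner_smul_right]
      rw [e1]
      ring
    rw [he] at h0
    exact h0
  have hq0 : 0 ≤ q := hpos (S u)
  have hd0 : 0 ≤ d := real_inner_self_nonneg
  rcases eq_or_lt_of_le hq0 with h | h
  · have hdz : d = 0 := by
      by_contra hne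
      have hdpos : 0 < d := lt_of_le_of_ne hd0 (Ne.symm hne)
      have hk := key (-(p + 1) / (2 * d))
      rw [← h] at hk
      have : 2 * (-(p + 1) / (2 * d)) * d = -(p + 1) := by
        field_simp
      nlinarith [hk, this]
    rw [hdz, ← h]
    norm_num
  · have hk := key (-d / q)
    have he : p + 2 * (-d / q) * d + (-d / q) ^ 2 * q = p - d ^ 2 / q := by
      field_simp
      ring
    rw [he] at hk
    have : d ^ 2 / q ≤ p := by linarith
    calc d ^ 2 = d ^ 2 / q * q := by field_simp
    _ ≤ p * q := by
        apply mul_le_mul_of_nonneg_right this hq0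

lemma aux_norm_bound (S : EuclideanSpace ℝ (Fin n) →L[ℝ] EuclideanSpace ℝ (Fin n))
    (hpos : ∀ u, 0 ≤ ⟪S u, u⟫) (hadj : ∀ u v, ⟪S u, v⟫ = ⟪u, S v⟫)
    {c : ℝ} (hc : 0 ≤ c) (hb : ∀ u, ⟪S u, u⟫ ≤ c * ‖u‖ ^ 2)
    (u : EuclideanSpace ℝ (Fin n)) : ‖S u‖ ≤ c * ‖u‖ := by
  have hcs := aux_cs S hpos hadj u
  rw [real_inner_self_eq_norm_sq] at hcs
  have h1 : ⟪S u, u⟫ ≤ c * ‖u‖ ^ 2 := hb u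
  have h2 : ⟪S (S u), S u⟫ ≤ c * ‖S u‖ ^ 2 := hb (S u)
  have h3 : 0 ≤ ⟪S u, u⟫ := hpos u
  have h4 : 0 ≤ ⟪S (S u), S u⟫ := hpos (S u)
  have h5 : (‖S u‖ ^ 2) ^ 2 ≤ (c * ‖u‖ ^ 2) * (c * ‖S u‖ ^ 2) :=
    le_trans hcs (mul_le_mul h1 h2 h4 (by positivity))
  rcases eq_or_lt_of_le (norm_nonneg (S u)) with h | h
  · rw [← h]; positivity
  · have hs2 : (0:ℝ) < ‖S u‖ ^ 2 := by positivity
    have h6 : ‖S u‖ ^ 2 ≤ (c * ‖u‖) ^ 2 := by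
      have h7 : ‖S u‖ ^ 2 * ‖S u‖ ^ 2 ≤ (c * ‖u‖) ^ 2 * ‖S u‖ ^ 2 := by nlinarith [h5]
      exact le_of_mul_le_mul_right h7 hs2
    nlinarith [h6, norm_nonneg (S u), mul_nonneg hc (norm_nonneg u)]

end Aux

set_option maxHeartbeats 1600000

theorem stmt_15 {n : ℕ} (P0 R11 L : Matrix (Fin n) (Fin n) ℝ)
    (hP0 : P0.IsSymm) (hR11 : R11.IsSymm)
    (hK : (R11 + P0).PosDef) (hL : L.PosSemidef) :
    (((R11 + P0) + L)⁻¹).PosSemidef ∧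
    ((R11 + P0)⁻¹ - ((R11 + P0) + L)⁻¹).PosSemidef ∧
    ∀ x : EuclideanSpace ℝ (Fin n),
      ⟪Matrix.toEuclideanCLM (𝕜 := ℝ)
          ((P0 + L) * ((R11 + (P0 + L))⁻¹ * (R11 + (P0 + L))⁻¹) * (P0 + L)) x, x⟫ ≤
        4 * (1 + ‖Matrix.toEuclideanCLM (𝕜 := ℝ) (R11 + P0)⁻¹‖ ^ 2 *
            (‖Matrix.toEuclideanCLM (𝕜 := ℝ) (R11 + P0)‖ ^ 2 +
              ‖Matrix.toEuclideanCLM (𝕜 := ℝ) P0‖ ^ 2)) * ‖x‖ ^ 2 := by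
  have hassoc : R11 + (P0 + L) = (R11 + P0) + L := (add_assoc R11 P0 L).symm
  rw [hassoc]
  set K := R11 + P0 with hKdef
  have hB : (K + L).PosDef := hK.add_posSemidef hL
  have hKdet : IsUnit K.det := (Matrix.isUnit_iff_isUnit_det _).mp hK.isUnit
  have hBdet : IsUnit (K + L).det := (Matrix.isUnit_iff_isUnit_det _).mp hB.isUnit
  have hK1 : K * K⁻¹ = 1 := Matrix.mul_nonsing_inv _ hKdet
  have hK2 : K⁻¹ * K = 1 := Matrix.nonsing_inv_mul _ hKdet
  have hB1 : (K + L) * (K + L)⁻¹ = 1 := Matrix.mul_nonsing_inv _ hBdet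
  have hB2 : (K + L)⁻¹ * (K + L) = 1 := Matrix.nonsing_inv_mul _ hBdet
  have part1 : ((K + L)⁻¹).PosSemidef := hB.inv.posSemidef
  have hLh : Lᴴ = L := hL.isHermitian
  have hBinvh : ((K + L)⁻¹).IsHermitian := hB.inv.isHermitian
  have hX : (L + L * K⁻¹ * L).PosSemidef := by
    have h1 : (Lᴴ * K⁻¹ * L).PosSemidef := hK.inv.posSemidef.conjTranspose_mul_mul_same L
    rw [hLh] at h1
    exact hL.add h1
  have hconj : ((K + L)⁻¹ * (L + L * K⁻¹ * L) * (K + L)⁻¹).PosSemidef := by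
    have h := hX.conjTranspose_mul_mul_same ((K + L)⁻¹)
    rwa [hBinvh.eq] at h
  have e1 : (1 + K⁻¹ * L) * (K + L)⁻¹ = K⁻¹ := by
    have h : (1 : Matrix (Fin n) (Fin n) ℝ) + K⁻¹ * L = K⁻¹ * (K + L) := by
      rw [mul_add, hK2]
    rw [h, mul_assoc, hB1, mul_one]
  have e2 : L + L * K⁻¹ * L = L * (1 + K⁻¹ * L) := by
    rw [mul_add, mul_one, mul_assoc]
  have e3 : (K + L)⁻¹ * L = 1 - (K + L)⁻¹ * K := by
    rw [← hB2, ← mul_sub]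
    congr 1
    abel
  have hiden : (K + L)⁻¹ * (L + L * K⁻¹ * L) * (K + L)⁻¹ = K⁻¹ - (K + L)⁻¹ := by
    calc (K + L)⁻¹ * (L + L * K⁻¹ * L) * (K + L)⁻¹
        = (K + L)⁻¹ * L * ((1 + K⁻¹ * L) * (K + L)⁻¹) := by
          rw [e2, ← mul_assoc, mul_assoc ((K + L)⁻¹ * L)]
    _ = (K + L)⁻¹ * L * K⁻¹ := by rw [e1]
    _ = (1 - (K + L)⁻¹ * K) * K⁻¹ := by rw [e3]
    _ = K⁻¹ - (K + L)⁻¹ := by rw [sub_mul, one_mul, mul_assoc, hK1, mul_one]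
  have part2 : (K⁻¹ - (K + L)⁻¹).PosSemidef := by rw [← hiden]; exact hconj
  refine ⟨part1, part2, ?_⟩
  intro x
  have hPh : (P0 + L).IsHermitian := by
    rw [Matrix.IsHermitian, conjTranspose_add, hLh, conjTranspose_eq_transpose_of_trivial, hP0.eq]
  have hSpos : ∀ u, 0 ≤ ⟪Matrix.toEuclideanCLM (𝕜 := ℝ) (K + L)⁻¹ u, u⟫ :=
    fun u => aux_inner_psd part1 u
  have hSadj := fun u v => aux_adj hBinvh u v
  set c := ‖Matrix.toEuclideanCLM (𝕜 := ℝ) K⁻¹‖ with hcdef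
  have hc : 0 ≤ c := norm_nonneg _
  have hb : ∀ u, ⟪Matrix.toEuclideanCLM (𝕜 := ℝ) (K + L)⁻¹ u, u⟫ ≤ c * ‖u‖ ^ 2 := by
    intro u
    have h1 : ⟪Matrix.toEuclideanCLM (𝕜 := ℝ) (K + L)⁻¹ u, u⟫
        ≤ ⟪Matrix.toEuclideanCLM (𝕜 := ℝ) K⁻¹ u, u⟫ := by
      have h2 := aux_inner_psd part2 u
      rw [map_sub, ContinuousLinearMap.sub_apply, inner_sub_left] at h2
      linarith
    have h3 := real_inner_le_norm (Matrix.toEuclideanCLM (𝕜 := ℝ) K⁻¹ u) u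
    have h4 := ContinuousLinearMap.le_opNorm (Matrix.toEuclideanCLM (𝕜 := ℝ) K⁻¹) u
    nlinarith [norm_nonneg u]
  have hnormS : ∀ u, ‖Matrix.toEuclideanCLM (𝕜 := ℝ) (K + L)⁻¹ u‖ ≤ c * ‖u‖ :=
    aux_norm_bound _ hSpos hSadj hc hb
  have hMx : ⟪Matrix.toEuclideanCLM (𝕜 := ℝ)
      ((P0 + L) * ((K + L)⁻¹ * (K + L)⁻¹) * (P0 + L)) x, x⟫
      = ‖Matrix.toEuclideanCLM (𝕜 := ℝ) (K + L)⁻¹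
          (Matrix.toEuclideanCLM (𝕜 := ℝ) (P0 + L) x)‖ ^ 2 := by
    simp only [_root_.map_mul, ContinuousLinearMap.mul_apply]
    rw [aux_adj hPh, aux_adj hBinvh, real_inner_self_eq_norm_sq]
  have hBP : Matrix.toEuclideanCLM (𝕜 := ℝ) (K + L)⁻¹
      (Matrix.toEuclideanCLM (𝕜 := ℝ) (P0 + L) x)
      = x - Matrix.toEuclideanCLM (𝕜 := ℝ) (K + L)⁻¹
          (Matrix.toEuclideanCLM (𝕜 := ℝ) R11 x) := by
    have hmat : (K + L)⁻¹ * (P0 + L) = 1 - (K + L)⁻¹ * R11 := by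
      have h : P0 + L = (K + L) - R11 := by rw [hKdef]; abel
      rw [h, mul_sub, hB2]
    have := congrArg (fun A => Matrix.toEuclideanCLM (𝕜 := ℝ) A x) hmat
    simp only [_root_.map_mul, map_sub, _root_.map_one, ContinuousLinearMap.mul_apply,
      ContinuousLinearMap.sub_apply, ContinuousLinearMap.one_apply] at this
    exact this
  have hR : ‖Matrix.toEuclideanCLM (𝕜 := ℝ) R11‖
      ≤ ‖Matrix.toEuclideanCLM (𝕜 := ℝ) K‖ + ‖Matrix.toEuclideanCLM (𝕜 := ℝ) P0‖ := by
    have h : R11 = K - P0 := by rw [hKdef]; abel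
    rw [h, map_sub]
    exact norm_sub_le _ _
  have hnorm1 : ‖Matrix.toEuclideanCLM (𝕜 := ℝ) (K + L)⁻¹
      (Matrix.toEuclideanCLM (𝕜 := ℝ) (P0 + L) x)‖
      ≤ ‖x‖ + c * ((‖Matrix.toEuclideanCLM (𝕜 := ℝ) K‖
          + ‖Matrix.toEuclideanCLM (𝕜 := ℝ) P0‖) * ‖x‖) := by
    rw [hBP]
    refine le_trans (norm_sub_le _ _) ?_
    have h5 := hnormS (Matrix.toEuclideanCLM (𝕜 := ℝ) R11 x)
    have h6 : ‖Matrix.toEuclideanCLM (𝕜 := ℝ) R11 x‖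
        ≤ (‖Matrix.toEuclideanCLM (𝕜 := ℝ) K‖ + ‖Matrix.toEuclideanCLM (𝕜 := ℝ) P0‖) * ‖x‖ :=
      le_trans (ContinuousLinearMap.le_opNorm _ _)
        (mul_le_mul_of_nonneg_right hR (norm_nonneg x))
    have h7 := mul_le_mul_of_nonneg_left h6 hc
    linarith [mul_le_mul_of_nonneg_left h6 hc, h5.trans h7]
  rw [hMx]
  set a := ‖Matrix.toEuclideanCLM (𝕜 := ℝ) K‖ with hadef
  set b := ‖Matrix.toEuclideanCLM (𝕜 := ℝ) P0‖ with hbdef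
  have ha : 0 ≤ a := norm_nonneg _
  have hb' : 0 ≤ b := norm_nonneg _
  have hr : 0 ≤ ‖x‖ := norm_nonneg _
  have hs : 0 ≤ ‖Matrix.toEuclideanCLM (𝕜 := ℝ) (K + L)⁻¹
      (Matrix.toEuclideanCLM (𝕜 := ℝ) (P0 + L) x)‖ := norm_nonneg _
  nlinarith [hnorm1, sq_nonneg (1 - c * (a + b)), sq_nonneg (a - b), sq_nonneg (‖x‖),
    mul_nonneg (mul_nonneg hc ha) hr, mul_nonneg (mul_nonneg hc hb') hr,
    mul_nonneg hc hr, sq_nonneg ((1 - c * (a + b)) * ‖x‖), sq_nonneg ((a - b) * c * ‖x‖)]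
end
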